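/- The correctable algebra of a channel is independent of the choice of Kraus representation: if {E_a} and {F_b} are two Kraus representations of the same CPTP map E on M_n(C), then {X : [E_a† E_b, X] = 0 ∀a,b} = {X : [F_a† F_b, X] = 0 ∀a,b}. -/

import Mathlib

open Matrix

noncomputable def toE {n : ℕ} : Matrix (Fin n) (Fin n) ℂ ≃ₗ[ℂ] EuclideanSpace ℂ (Fin n × Fin n) where
  toFun M := WithLp.toLp 2 (fun p : Fin n × Fin n => M p.1 p.2)
  invFun f := Matrix.of fun i j => f (i, j)
  map_add' _ _ := rfl
  map_smul' _ _ := rfl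
  left_inv _ := rfl
  right_inv _ := rfl

lemma expand_sum {N n : ℕ} (u : Fin N → EuclideanSpace ℂ (Fin n × Fin n))
    (y : EuclideanSpace ℂ (Fin n × Fin n)) :
    ∑ i, (inner ℂ y (u i) : ℂ) * inner ℂ (u i) y
      = ∑ p, ∑ q, ((starRingEnd ℂ) (y p) * y q) * ∑ i, u i p * (starRingEnd ℂ) (u i q) := by
  calc ∑ i, (inner ℂ y (u i) : ℂ) * inner ℂ (u i) y
      = ∑ i, ∑ p, ∑ q, ((starRingEnd ℂ) (y p) * y q) * (u i p * (starRingEnd ℂ) (u i q)) := by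
        simp only [PiLp.inner_apply, RCLike.inner_apply, Finset.sum_mul_sum]
        exact Finset.sum_congr rfl fun i _ => Finset.sum_congr rfl fun p _ =>
          Finset.sum_congr rfl fun q _ => by ring
    _ = ∑ p, ∑ i, ∑ q, ((starRingEnd ℂ) (y p) * y q) * (u i p * (starRingEnd ℂ) (u i q)) :=
        Finset.sum_comm
    _ = ∑ p, ∑ q, ∑ i, ((starRingEnd ℂ) (y p) * y q) * (u i p * (starRingEnd ℂ) (u i q)) :=
        Finset.sum_congr rfl fun p _ => Finset.sum_comm
    _ = _ := by simp [Finset.mul_sum]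

/-- If two Kraus families give the same channel, each F b lies in the span of the E a. -/
lemma mem_span_of_same {n k m : ℕ} (E : Fin k → Matrix (Fin n) (Fin n) ℂ)
    (F : Fin m → Matrix (Fin n) (Fin n) ℂ)
    (hsame : ∀ X : Matrix (Fin n) (Fin n) ℂ,
      ∑ a, E a * X * (E a)ᴴ = ∑ b, F b * X * (F b)ᴴ) (b : Fin m) :
    F b ∈ Submodule.span ℂ (Set.range E) := by
  classical
  set v : Fin k → EuclideanSpace ℂ (Fin n × Fin n) := fun a => toE (E a) with hv
  set w : Fin m → EuclideanSpace ℂ (Fin n × Fin n) := fun b => toE (F b) with hw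
  have hC : ∀ p q : Fin n × Fin n,
      ∑ a, v a p * (starRingEnd ℂ) (v a q) = ∑ b, w b p * (starRingEnd ℂ) (w b q) := by
    intro p q
    have := congrFun (congrFun (hsame (Matrix.single p.2 q.2 1)) p.1) q.1
    simp [Matrix.sum_apply, Matrix.mul_apply, Matrix.single, conjTranspose_apply,
      Finset.sum_mul, ite_and, Finset.sum_ite_eq, Finset.sum_ite_eq', v, w, toE] at this
    exact this
  have key2 : ∀ y : EuclideanSpace ℂ (Fin n × Fin n),
      (∀ a, (inner ℂ (v a) y : ℂ) = 0) → ∀ b, (inner ℂ (w b) y : ℂ) = 0 := by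
    intro y hy b'
    have h1 : ∑ i, (inner ℂ y (v i) : ℂ) * inner ℂ (v i) y
        = ∑ i, (inner ℂ y (w i) : ℂ) * inner ℂ (w i) y := by
      rw [expand_sum, expand_sum]
      exact Finset.sum_congr rfl fun p _ => Finset.sum_congr rfl fun q _ => by rw [hC]
    have h2 : ∑ i, (inner ℂ y (w i) : ℂ) * inner ℂ (w i) y = 0 := by
      rw [← h1]
      exact Finset.sum_eq_zero fun a _ => by rw [hy a, mul_zero]
    have h3 : ∑ i, Complex.normSq ((inner ℂ (w i) y : ℂ)) = 0 := by
      have : ((∑ i, Complex.normSq ((inner ℂ (w i) y : ℂ)) : ℝ) : ℂ) = 0 := by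
        rw [← h2]
        push_cast
        refine Finset.sum_congr rfl fun i _ => ?_
        rw [show (inner ℂ y (w i) : ℂ) = (starRingEnd ℂ) (inner ℂ (w i) y) from
          (inner_conj_symm _ _).symm]
        exact Complex.normSq_eq_conj_mul_self
      exact_mod_cast this
    have h4 := (Finset.sum_eq_zero_iff_of_nonneg
      (fun i _ => Complex.normSq_nonneg _)).mp h3 b' (Finset.mem_univ _)
    exact Complex.normSq_eq_zero.mp h4
  -- double orthogonal
  set S : Submodule ℂ (EuclideanSpace ℂ (Fin n × Fin n)) := Submodule.span ℂ (Set.range v)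
  have hwS : w b ∈ S := by
    rw [← Submodule.orthogonal_orthogonal S]
    intro y hy
    have hy' : ∀ a, (inner ℂ (v a) y : ℂ) = 0 := fun a =>
      (Submodule.mem_orthogonal S y).mp hy (v a) (Submodule.subset_span ⟨a, rfl⟩)
    have := key2 y hy' b
    rw [← inner_conj_symm, this, map_zero]
  -- transfer back
  have hrange : Set.range v = ⇑(toE (n := n)).toLinearMap '' Set.range E := by
    rw [← Set.range_comp]; rfl
  have hS : S = Submodule.map (toE (n := n)).toLinearMap (Submodule.span ℂ (Set.range E)) := by
    rw [Submodule.map_span, ← hrange]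
  rw [hS] at hwS
  rcases hwS with ⟨G, hG, hGe⟩
  have : G = F b := toE.injective hGe
  rwa [this] at hG

lemma commute_of_span {n : ℕ} {s : Set (Matrix (Fin n) (Fin n) ℂ)}
    (X : Matrix (Fin n) (Fin n) ℂ)
    (hX : ∀ A ∈ s, ∀ B ∈ s, Commute (Aᴴ * B) X) :
    ∀ A ∈ Submodule.span ℂ s, ∀ B ∈ Submodule.span ℂ s, Commute (Aᴴ * B) X := by
  intro A hA
  induction hA using Submodule.span_induction with
  | mem A hA =>
    intro B hB
    induction hB using Submodule.span_induction with
    | mem B hB => exact hX A hA B hB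
    | zero => simpa [Commute, SemiconjBy] using rfl
    | add B₁ B₂ _ _ h1 h2 => simpa [mul_add] using h1.add_left h2
    | smul c B _ h => simpa [mul_smul_comm] using h.smul_left c
  | zero => intro B hB; simp [Commute, SemiconjBy]
  | add A₁ A₂ _ _ h1 h2 =>
    intro B hB
    simpa [conjTranspose_add, add_mul] using (h1 B hB).add_left (h2 B hB)
  | smul c A _ h =>
    intro B hB
    simpa [conjTranspose_smul, smul_mul_assoc] using (h B hB).smul_left _

/-- the correctable algebra is independent of the Kraus representation:
if {E_a} and {F_b} define the same CPTP map, the commutation conditions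
[E_a† E_b, X] = 0 and [F_a† F_b, X] = 0 define the same set. -/
theorem stmt3 {n k m : ℕ} (E : Fin k → Matrix (Fin n) (Fin n) ℂ)
    (F : Fin m → Matrix (Fin n) (Fin n) ℂ)
    (hE : ∑ a, (E a)ᴴ * E a = 1) (hF : ∑ b, (F b)ᴴ * F b = 1)
    (hsame : ∀ X : Matrix (Fin n) (Fin n) ℂ,
      ∑ a, E a * X * (E a)ᴴ = ∑ b, F b * X * (F b)ᴴ) :
    {X : Matrix (Fin n) (Fin n) ℂ | ∀ a b, Commute ((E a)ᴴ * E b) X} =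
      {X : Matrix (Fin n) (Fin n) ℂ | ∀ a b, Commute ((F a)ᴴ * F b) X} := by
  ext X
  simp only [Set.mem_setOf_eq]
  constructor
  · intro hX a b
    have h := commute_of_span (s := Set.range E) X
      (fun A hA B hB => by obtain ⟨a, rfl⟩ := hA; obtain ⟨b, rfl⟩ := hB; exact hX a b)
    exact h (F a) (mem_span_of_same E F hsame a) (F b) (mem_span_of_same E F hsame b)
  · intro hX a b
    have h := commute_of_span (s := Set.range F) X
      (fun A hA B hB => by obtain ⟨a, rfl⟩ := hA; obtain ⟨b, rfl⟩ := hB; exact hX a b)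
    exact h (E a) (mem_span_of_same F E (fun X => (hsame X).symm) a)
      (E b) (mem_span_of_same F E (fun X => (hsame X).symm) b)
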